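/- Spurious-pole cancellation identity at five points: under five-point momentum conservation, for any α ∈ ℂ with ⟨14⟩ ≠ 0 and α⟨41⟩ − ⟨45⟩ ≠ 0, one has ([23]⟨34⟩/⟨14⟩) · (α⟨41⟩/(α⟨41⟩ − ⟨45⟩)) + ⟨45⟩·([12] + α[52])/(⟨45⟩ − α⟨41⟩) = [12]. (Here [12] + α[52] is the shifted bracket [1̂2] and ⟨45⟩ − α⟨41⟩ is the shifted bracket ⟨45̂⟩ produced by the BCFW shift λ̃̂₁ = λ̃₁ + αλ̃₅, λ̂₅ = λ₅ − αλ₁.) -/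

import Mathlib

/-- The antisymmetric two-component spinor bracket `⟨u v⟩ = u₀v₁ − u₁v₀`. -/
def br2 (u v : Fin 2 → ℂ) : ℂ := u 0 * v 1 - u 1 * v 0

/-- Spurious-pole cancellation identity at five points: under five-point momentum
conservation, `([23]⟨34⟩/⟨14⟩)·(α⟨41⟩/(α⟨41⟩−⟨45⟩)) + ⟨45⟩([12]+α[52])/(⟨45⟩−α⟨41⟩) = [12]`. -/
theorem five_point_spurious_pole_cancellation
    (l1 l2 l3 l4 l5 lt1 lt2 lt3 lt4 lt5 : Fin 2 → ℂ)
    (hcons : ∀ a b : Fin 2,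
      l1 a * lt1 b + l2 a * lt2 b + l3 a * lt3 b + l4 a * lt4 b + l5 a * lt5 b = 0)
    (α : ℂ) (h14 : br2 l1 l4 ≠ 0) (hden : α * br2 l4 l1 - br2 l4 l5 ≠ 0) :
    (br2 lt2 lt3 * br2 l3 l4 / br2 l1 l4) *
        (α * br2 l4 l1 / (α * br2 l4 l1 - br2 l4 l5))
      + br2 l4 l5 * (br2 lt1 lt2 + α * br2 lt5 lt2) / (br2 l4 l5 - α * br2 l4 l1)
      = br2 lt1 lt2 := by
  have key : br2 l4 l1 * br2 lt1 lt2 + br2 l4 l3 * br2 lt3 lt2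
      + br2 l4 l5 * br2 lt5 lt2 = 0 := by
    unfold br2
    linear_combination (l4 0 * lt2 1) * hcons 1 0 - (l4 0 * lt2 0) * hcons 1 1
      - (l4 1 * lt2 1) * hcons 0 0 + (l4 1 * lt2 0) * hcons 0 1
  have hden' : br2 l4 l5 - α * br2 l4 l1 ≠ 0 := by
    intro h; apply hden; linear_combination -h
  have hA : br2 l1 l4 = - br2 l4 l1 := by unfold br2; ring
  have hA' : br2 l4 l1 ≠ 0 := by
    rw [hA] at h14; simpa using h14
  have hkey' : br2 lt2 lt3 * br2 l3 l4
      = -(br2 l4 l1 * br2 lt1 lt2 + br2 l4 l5 * br2 lt5 lt2) := by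
    unfold br2 at key ⊢; linear_combination key
  rw [hkey', hA]
  rw [show α * br2 l4 l1 - br2 l4 l5 = -(br2 l4 l5 - α * br2 l4 l1) by ring]
  field_simp
  have hD : -(br2 l4 l1 * α) + br2 l4 l5 ≠ 0 := by
    intro h; apply hden'; linear_combination h
  linear_combination (br2 lt1 lt2) * (mul_inv_cancel₀ hD)
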